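/- Let A be an n×n complex Hermitian matrix and 1 ≤ l < m ≤ n. Then for all real θ and φ: r_{l,m}(θ,φ)* · A · r_{l,m}(θ,φ) = cos²(θ)·A_{l,l} + sin²(θ)·A_{m,m} − |A_{l,m}|·sin(2θ)·cos(φ + arg(A_{l,m})), where A_{l,l} and A_{m,m} are the (real) diagonal entries of A and arg denotes the complex argument. -/

import Mathlib

open Matrix Real Complex Finset Filter

noncomputable section

/-- The `n × n` complex plane-rotation matrix `R_{l,m}(θ,φ)`: equal to the identity except
that its `(l,l)` and `(m,m)` entries equal `cos θ`, its `(l,m)` entry equals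
`e^{-iφ}·sin θ`, and its `(m,l)` entry equals `-e^{iφ}·sin θ`. -/
def planeRot (n : ℕ) (l m : Fin n) (θ φ : ℝ) : Matrix (Fin n) (Fin n) ℂ :=
  fun i j =>
    if i = l ∧ j = l then (Real.cos θ : ℂ)
    else if i = m ∧ j = m then (Real.cos θ : ℂ)
    else if i = l ∧ j = m then Complex.exp (-(φ : ℂ) * Complex.I) * (Real.sin θ : ℂ)
    else if i = m ∧ j = l then -(Complex.exp ((φ : ℂ) * Complex.I) * (Real.sin θ : ℂ))
    else if i = j then 1 else 0

/-- `r_{l,m}(θ,φ)`: the `l`-th column of `R_{l,m}(θ,φ)`. -/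
def rotCol (n : ℕ) (l m : Fin n) (θ φ : ℝ) : Fin n → ℂ :=
  fun i => planeRot n l m θ φ i l

/-- `P(A)`: the Frobenius norm of the strictly upper-triangular part of `A`. -/
def offP {n : ℕ} (A : Matrix (Fin n) (Fin n) ℂ) : ℝ :=
  Real.sqrt (∑ l, ∑ m, if l < m then ‖A l m‖ ^ 2 else 0)

/-- The Frobenius norm of a matrix. -/
def frob {n : ℕ} (A : Matrix (Fin n) (Fin n) ℂ) : ℝ :=
  Real.sqrt (∑ i, ∑ j, ‖A i j‖ ^ 2)

/-- `B` is the result of an `η`-accurate Jacobi rotation of the Hermitian matrix `A`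
at the pair `(l,m)`. -/
def JacobiStep {n : ℕ} (η : ℝ) (l m : Fin n) (A B : Matrix (Fin n) (Fin n) ℂ) : Prop :=
  ∃ θh φh ηφ ηθ : ℝ,
    |θh| ≤ π / 4 ∧ |ηφ| ≤ η ∧ |ηθ| ≤ η ∧
    φh = -Complex.arg (A l m) + ηφ ∧
    ((A l l ≠ A m m ∧
        θh = (1 / 2) * Real.arctan (2 * ‖A l m‖ * Real.cos ηφ /
              ((A m m).re - (A l l).re)) + ηθ) ∨
      (A l l = A m m ∧ (θh = 0 ∨ θh = π / 4 ∨ θh = -(π / 4)))) ∧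
    B = (planeRot n l m θh φh)ᴴ * A * planeRot n l m θh φh

/-- The pairs of one cyclic Jacobi sweep, in row (lexicographic) order
`(1,2),(1,3),…,(1,n),(2,3),…,(n−1,n)`. -/
def sweepList (n : ℕ) : List (Fin n × Fin n) :=
  (List.finRange n).flatMap fun l =>
    (List.finRange n).filterMap fun m => if l < m then some (l, m) else none

/-- the quadratic form of a Hermitian matrix along `r_{l,m}(θ,φ)` is the
sinusoid `cos²θ·A_{l,l} + sin²θ·A_{m,m} − |A_{l,m}|·sin(2θ)·cos(φ + arg A_{l,m})`. -/
theorem quadratic_form_along_rotation_column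
    {n : ℕ} (hn : 2 ≤ n) (A : Matrix (Fin n) (Fin n) ℂ) (hA : A.IsHermitian)
    (l m : Fin n) (hlm : l < m) (θ φ : ℝ) :
    star (rotCol n l m θ φ) ⬝ᵥ A.mulVec (rotCol n l m θ φ) =
      ((Real.cos θ ^ 2 * (A l l).re + Real.sin θ ^ 2 * (A m m).re -
        ‖A l m‖ * Real.sin (2 * θ) *
          Real.cos (φ + Complex.arg (A l m)) : ℝ) : ℂ) := by
  have hE : Complex.exp ((φ:ℂ) * Complex.I) ≠ 0 := Complex.exp_ne_zero _
  have hF : Complex.exp ((Complex.arg (A l m) : ℂ) * Complex.I) ≠ 0 := Complex.exp_ne_zero _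
  set E : ℂ := Complex.exp ((φ:ℂ) * Complex.I) with hEdef
  set F : ℂ := Complex.exp ((Complex.arg (A l m) : ℂ) * Complex.I) with hFdef
  set ρ : ℝ := ‖A l m‖ with hρ
  set α : ℝ := Complex.arg (A l m) with hα
  set c : ℂ := (Real.cos θ : ℂ) with hc
  set s : ℂ := E * (Real.sin θ : ℂ) with hs
  have hr : rotCol n l m θ φ =
      c • (Pi.single l 1 : Fin n → ℂ) + (-s) • (Pi.single m 1 : Fin n → ℂ) := by
    funext i
    by_cases hil : i = l
    · subst hil
      simp [rotCol, planeRot, Pi.single_apply, hlm.ne, hlm.ne', hc, Complex.ofReal_cos]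
    · by_cases him : i = m
      · subst him
        simp [rotCol, planeRot, Pi.single_apply, hlm.ne, hlm.ne', hil, hs, hEdef,
          Complex.ofReal_sin]
      · simp [rotCol, planeRot, Pi.single_apply, hil, him]
  have hml : A m l = star (A l m) := (hA.apply m l).symm
  have hll : (((A l l).re : ℝ) : ℂ) = A l l := hA.coe_re_apply_self l
  have hmm : (((A m m).re : ℝ) : ℂ) = A m m := hA.coe_re_apply_self m
  have expand : star (rotCol n l m θ φ) ⬝ᵥ A.mulVec (rotCol n l m θ φ) =
      star c * c * A l l + star c * (-s) * A l m +
      star (-s) * c * A m l + star (-s) * (-s) * A m m := by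
    rw [hr]
    have h1 : star (Pi.single l (1:ℂ)) = (Pi.single l 1 : Fin n → ℂ) := by
      funext i; by_cases h : i = l <;> simp [Pi.single_apply, h]
    have h2 : star (Pi.single m (1:ℂ)) = (Pi.single m 1 : Fin n → ℂ) := by
      funext i; by_cases h : i = m <;> simp [Pi.single_apply, h]
    simp only [star_add, star_smul, mulVec_add, mulVec_smul, Matrix.mulVec_single,
      add_dotProduct, smul_dotProduct, dotProduct_add, dotProduct_smul, h1, h2]
    simp only [single_dotProduct, one_mul, smul_eq_mul, mul_one, MulOpposite.op_one, one_smul,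
      Matrix.col_apply]
    ring
  have hAlm : A l m = (ρ : ℂ) * F := by
    rw [hρ, hFdef, hα]; exact (Complex.norm_mul_exp_arg_mul_I (A l m)).symm
  have hstarc : star c = c := by
    rw [hc, Complex.star_def, Complex.conj_ofReal]
  have hstarE : star E = E⁻¹ := by
    rw [hEdef, Complex.star_def, ← Complex.exp_conj, ← Complex.exp_neg]
    congr 1
    simp [Complex.conj_I]
  have hstarF : star F = F⁻¹ := by
    rw [hFdef, Complex.star_def, ← Complex.exp_conj, ← Complex.exp_neg]
    congr 1
    simp [Complex.conj_I]
  have hstars : star s = E⁻¹ * (Real.sin θ : ℂ) := by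
    rw [hs, star_mul', hstarE, Complex.star_def, Complex.conj_ofReal]
  have hstarAlm : star (A l m) = (ρ : ℂ) * F⁻¹ := by
    conv_lhs => rw [hAlm]
    rw [star_mul', hstarF, Complex.star_def, Complex.conj_ofReal]
  have hcosφα : ((Real.cos (φ + α) : ℝ) : ℂ) =
      (E * F + (E * F)⁻¹) / 2 := by
    rw [Complex.ofReal_cos, Complex.cos, hEdef, hFdef, ← Complex.exp_add, ← Complex.exp_neg]
    push_cast
    ring_nf
  rw [expand, hml]
  simp only [star_neg, hstars, hstarc, hstarAlm]
  push_cast [hcosφα, Real.sin_two_mul]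
  rw [hll, hmm]
  rw [hc, hs, hEdef, hFdef, hAlm]
  field_simp [Complex.exp_ne_zero]
  simp only [← Complex.ofReal_sin, ← Complex.ofReal_cos, hFdef]
  ring_nf


end
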